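/- Let γ be a left exact radical functor on R-Mod and 𝔭 a prime ideal of R. Then γ(E_R(R/𝔭)) is equal to either E_R(R/𝔭) or 0, where E_R(R/𝔭) is the injective hull of R/𝔭. -/

import Mathlib

universe u

/-- A preradical functor on `R`-Mod: a subfunctor of the identity functor, given by
a choice of submodule `γ(M) ⊆ M` for every `R`-module `M`, such that every linear map
`f : M → N` restricts to a map `γ(M) → γ(N)` (the action on morphisms being restriction). -/
structure Preradical (R : Type u) [CommRing R] where
  obj : (M : Type u) → [AddCommGroup M] → [Module R M] → Submodule R M
  map_le : ∀ {M N : Type u} [AddCommGroup M] [Module R M] [AddCommGroup N] [Module R N]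
    (f : M →ₗ[R] N), (obj M).map f ≤ obj N

variable {R : Type u} [CommRing R]

/-- A preradical functor is left exact iff it preserves kernels: for every linear map
`f : M → N`, `γ(ker f)` (viewed inside `M`) equals `γ(M) ∩ ker f`. -/
def Preradical.IsLeftExact (γ : Preradical R) : Prop :=
  ∀ {M N : Type u} [AddCommGroup M] [Module R M] [AddCommGroup N] [Module R N]
    (f : M →ₗ[R] N),
      (γ.obj ↥(LinearMap.ker f)).map (LinearMap.ker f).subtype
        = γ.obj M ⊓ LinearMap.ker f

/-- A preradical functor `γ` is a radical functor if `γ(M/γ(M)) = 0` for every module `M`. -/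
def Preradical.IsRadical (γ : Preradical R) : Prop :=
  ∀ (M : Type u) [AddCommGroup M] [Module R M], γ.obj (M ⧸ γ.obj M) = ⊥

/-- A preradical functor preserves injectivity if it sends injective modules to
injective modules. -/
def Preradical.PreservesInjectivity (γ : Preradical R) : Prop :=
  ∀ (M : Type u) [AddCommGroup M] [Module R M],
    Module.Injective R M → Module.Injective R ↥(γ.obj M)

namespace Preradical

variable (γ : Preradical R)

theorem top_of_surj {M N : Type u} [AddCommGroup M] [Module R M] [AddCommGroup N] [Module R N]
    (f : M →ₗ[R] N) (hf : Function.Surjective f) (h : γ.obj M = ⊤) : γ.obj N = ⊤ := by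
  have h2 := γ.map_le f
  rw [h, Submodule.map_top, LinearMap.range_eq_top.mpr hf] at h2
  exact top_le_iff.mp h2

theorem obj_inf (hle : γ.IsLeftExact) {M : Type u} [AddCommGroup M] [Module R M]
    (N : Submodule R M) : (γ.obj ↥N).map N.subtype = γ.obj M ⊓ N := by
  have h := hle N.mkQ
  have e := congrArg (fun S : Submodule R M => Submodule.map S.subtype (γ.obj ↥S))
    (Submodule.ker_mkQ N)
  calc Submodule.map N.subtype (γ.obj ↥N)
      = Submodule.map (LinearMap.ker N.mkQ).subtype (γ.obj ↥(LinearMap.ker N.mkQ)) := e.symm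
    _ = γ.obj M ⊓ LinearMap.ker N.mkQ := h
    _ = γ.obj M ⊓ N := by rw [Submodule.ker_mkQ]

theorem top_of_inj (hle : γ.IsLeftExact) {M N : Type u} [AddCommGroup M] [Module R M]
    [AddCommGroup N] [Module R N] (f : M →ₗ[R] N) (hf : Function.Injective f)
    (h : γ.obj N = ⊤) : γ.obj M = ⊤ := by
  have h0 := γ.obj_inf hle (LinearMap.range f)
  rw [h, top_inf_eq] at h0
  have h1 : γ.obj ↥(LinearMap.range f) = ⊤ := by
    apply Submodule.map_injective_of_injective (LinearMap.range f).injective_subtype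
    rw [h0, Submodule.map_top, Submodule.range_subtype]
  exact γ.top_of_surj (LinearEquiv.ofInjective f hf).symm.toLinearMap
    (LinearEquiv.ofInjective f hf).symm.surjective h1

theorem obj_obj (hle : γ.IsLeftExact) (M : Type u) [AddCommGroup M] [Module R M] :
    γ.obj ↥(γ.obj M) = ⊤ := by
  have h0 := γ.obj_inf hle (γ.obj M)
  rw [inf_idem] at h0
  apply Submodule.map_injective_of_injective (γ.obj M).injective_subtype
  rw [h0, Submodule.map_top, Submodule.range_subtype]

theorem top_of_spans {M : Type u} [AddCommGroup M] [Module R M]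
    (h : ∀ x : M, γ.obj ↥(Submodule.span R {x}) = ⊤) : γ.obj M = ⊤ := by
  rw [Submodule.eq_top_iff']
  intro x
  have h1 := γ.map_le (Submodule.span R {x}).subtype
  rw [h x, Submodule.map_top, Submodule.range_subtype] at h1
  exact h1 (Submodule.mem_span_singleton_self x)

theorem top_of_ext (hrad : γ.IsRadical) {M : Type u} [AddCommGroup M] [Module R M]
    (N : Submodule R M) (h1 : γ.obj ↥N = ⊤) (h2 : γ.obj (M ⧸ N) = ⊤) : γ.obj M = ⊤ := by
  have hN : N ≤ γ.obj M := by
    have h3 := γ.map_le N.subtype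
    rwa [h1, Submodule.map_top, Submodule.range_subtype] at h3
  have hN' : N ≤ Submodule.comap LinearMap.id (γ.obj M) := hN
  set g : (M ⧸ N) →ₗ[R] (M ⧸ γ.obj M) := Submodule.mapQ N (γ.obj M) LinearMap.id hN' with hg
  have hgs : Function.Surjective g := by
    intro z
    obtain ⟨m, rfl⟩ := (γ.obj M).mkQ_surjective z
    exact ⟨N.mkQ m, by simp [hg, Submodule.mapQ_apply]⟩
  have htop := γ.top_of_surj g hgs h2
  rw [hrad M] at htop
  rw [← Submodule.Quotient.subsingleton_iff]
  constructor
  intro a b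
  have ha : a ∈ (⊥ : Submodule R (M ⧸ γ.obj M)) := htop ▸ Submodule.mem_top
  have hb : b ∈ (⊥ : Submodule R (M ⧸ γ.obj M)) := htop ▸ Submodule.mem_top
  rw [Submodule.mem_bot] at ha hb
  rw [ha, hb]

theorem span_top_of {M : Type u} [AddCommGroup M] [Module R M] (x : M) (I : Ideal R)
    (hann : ∀ r ∈ I, r • x = 0) (hq : γ.obj (R ⧸ I) = ⊤) :
    γ.obj ↥(Submodule.span R {x}) = ⊤ := by
  set x' : ↥(Submodule.span R {x}) := ⟨x, Submodule.mem_span_singleton_self x⟩ with hx'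
  have hker : I ≤ LinearMap.ker (LinearMap.toSpanSingleton R ↥(Submodule.span R {x}) x') := by
    intro r hr
    rw [LinearMap.mem_ker, LinearMap.toSpanSingleton_apply]
    exact Subtype.ext (hann r hr)
  set g := Submodule.liftQ I (LinearMap.toSpanSingleton R ↥(Submodule.span R {x}) x') hker
    with hgdef
  have hgs : Function.Surjective g := by
    rintro ⟨z, hz⟩
    obtain ⟨r, rfl⟩ := Submodule.mem_span_singleton.mp hz
    refine ⟨Submodule.Quotient.mk r, ?_⟩
    rw [hgdef, Submodule.liftQ_apply, LinearMap.toSpanSingleton_apply]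
    rfl
  exact γ.top_of_surj g hgs hq

end Preradical

/-- Let `γ` be a left exact radical functor on `R`-Mod (`R` commutative noetherian) and
`𝔭` a prime ideal. If `E` is an injective hull of `R/𝔭` (an injective module containing
`R/𝔭` as an essential submodule), then `γ(E)` is either all of `E` or `0`. -/


theorem stmt9 [IsNoetherianRing R] (γ : Preradical R)
    (hle : γ.IsLeftExact) (hrad : γ.IsRadical)
    (p : Ideal R) (hp : p.IsPrime)
    (E : Type u) [AddCommGroup E] [Module R E] (hE : Module.Injective R E)
    (φ : (R ⧸ p) →ₗ[R] E) (hφ : Function.Injective φ)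
    (hess : ∀ N : Submodule R E, N ≠ ⊥ → N ⊓ LinearMap.range φ ≠ ⊥) :
    γ.obj E = ⊤ ∨ γ.obj E = ⊥ := by
  by_cases h0 : γ.obj E = ⊥
  · exact Or.inr h0
  refine Or.inl ?_
  -- pick a nonzero element of γ(E) ∩ range φ
  obtain ⟨y, hy, hy0⟩ := (Submodule.ne_bot_iff _).mp (hess (γ.obj E) h0)
  obtain ⟨hyγ, a, ha⟩ := hy
  have ha0 : a ≠ 0 := by
    rintro rfl
    exact hy0 (by rw [← ha, map_zero])
  obtain ⟨t, rfl⟩ := Submodule.Quotient.mk_surjective p a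
  have ht : t ∉ p := by
    intro h
    exact ha0 ((Submodule.Quotient.mk_eq_zero p).mpr h)
  have key : ∀ r : R, r • y = 0 ↔ r ∈ p := by
    intro r
    constructor
    · intro h
      rw [← ha, ← map_smul] at h
      have h2 : r • (Submodule.Quotient.mk t : R ⧸ p) = 0 := by
        apply hφ
        rw [h, map_zero]
      rw [← Submodule.Quotient.mk_smul, Submodule.Quotient.mk_eq_zero, smul_eq_mul] at h2
      exact (hp.mem_or_mem h2).resolve_right ht
    · intro hr
      rw [← ha, ← map_smul, ← Submodule.Quotient.mk_smul, smul_eq_mul]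
      rw [(Submodule.Quotient.mk_eq_zero p).mpr (p.mul_mem_right t hr), map_zero]
  -- γ(E) is itself torsion
  have hγE : γ.obj ↥(γ.obj E) = ⊤ := γ.obj_obj hle E
  -- R ⧸ p is torsion
  have hRp : γ.obj (R ⧸ p) = ⊤ := by
    set f0 := LinearMap.toSpanSingleton R ↥(γ.obj E) ⟨y, hyγ⟩ with hf0
    have hkf0 : ∀ r : R, r ∈ LinearMap.ker f0 ↔ r ∈ p := by
      intro r
      rw [LinearMap.mem_ker, hf0, LinearMap.toSpanSingleton_apply, ← key r]
      constructor
      · intro h; exact congrArg Subtype.val h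
      · intro h; exact Subtype.ext h
    have hker : p ≤ LinearMap.ker f0 := fun r hr => (hkf0 r).mpr hr
    set ψ := Submodule.liftQ p f0 hker with hψ
    have hinj : Function.Injective ψ := by
      rw [← LinearMap.ker_eq_bot, hψ]
      exact Submodule.ker_liftQ_eq_bot p f0 hker (fun r hr => (hkf0 r).mp hr)
    exact γ.top_of_inj hle ψ hinj hγE
  -- all R ⧸ I with p ^ n ≤ I are torsion
  have hpow : ∀ n : ℕ, ∀ I : Ideal R, p ^ n ≤ I → γ.obj (R ⧸ I) = ⊤ := by
    intro n
    induction n with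
    | zero =>
      intro I hI
      have hIT : I = ⊤ := by
        rw [eq_top_iff]
        simpa [Ideal.one_eq_top] using hI
      haveI : Subsingleton (R ⧸ I) := Submodule.Quotient.subsingleton_iff.mpr hIT
      rw [Submodule.eq_top_iff']
      intro x
      rw [Subsingleton.elim x 0]
      exact Submodule.zero_mem _
    | succ n ih =>
      intro I hI
      set N : Submodule R (R ⧸ I) := Submodule.map I.mkQ (p ^ n) with hN
      apply γ.top_of_ext hrad N
      · apply γ.top_of_spans
        rintro ⟨z, hz⟩
        apply γ.span_top_of _ p _ hRp
        rintro r hr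
        obtain ⟨s, hs, rfl⟩ := Submodule.mem_map.mp hz
        apply Subtype.ext
        show r • I.mkQ s = 0
        rw [← map_smul, smul_eq_mul]
        have hmem : r * s ∈ I := by
          apply hI
          rw [pow_succ]
          exact mul_comm r s ▸ Ideal.mul_mem_mul hs hr
        rw [Submodule.mkQ_apply, Submodule.Quotient.mk_eq_zero]
        exact hmem
      · have e := Submodule.quotientQuotientEquivQuotientSup I (p ^ n)
        exact γ.top_of_inj hle e.toLinearMap e.injective (ih _ le_sup_right)
  -- every nonzero element of E is killed by a power of each s ∈ p
  have hfin : ∀ x : E, x ≠ 0 → ∀ s ∈ p, ∃ k : ℕ, s ^ k • x = 0 := by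
    intro x hx s hs
    by_contra hcon
    push_neg at hcon
    set F : ℕ → Ideal R := fun k => LinearMap.ker (LinearMap.toSpanSingleton R E (s ^ k • x))
      with hF
    have hmono : Monotone F := by
      apply monotone_nat_of_le_succ
      intro k r hr
      simp only [hF, LinearMap.mem_ker, LinearMap.toSpanSingleton_apply] at hr ⊢
      have h4 : r • s ^ (k + 1) • x = s • (r • s ^ k • x) := by
        rw [pow_succ', mul_smul, smul_comm r s]
      rw [h4, hr, smul_zero]
    obtain ⟨k0, hk0⟩ := monotone_stabilizes_iff_noetherian.mpr
      (inferInstance : IsNoetherian R R) ⟨F, hmono⟩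
    set z := s ^ k0 • x with hzdef
    have hz0 : z ≠ 0 := hcon k0
    have hspan : Submodule.span R {z} ≠ ⊥ := by
      simpa [Submodule.span_singleton_eq_bot] using hz0
    obtain ⟨w, hw, hw0⟩ := (Submodule.ne_bot_iff _).mp (hess _ hspan)
    obtain ⟨hw1, b, hb⟩ := hw
    obtain ⟨r, hr⟩ := Submodule.mem_span_singleton.mp hw1
    have hsw : s • w = 0 := by
      obtain ⟨u, rfl⟩ := Submodule.Quotient.mk_surjective p b
      rw [← hb, ← map_smul, ← Submodule.Quotient.mk_smul, smul_eq_mul,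
        (Submodule.Quotient.mk_eq_zero p).mpr (p.mul_mem_right u hs), map_zero]
    have hrk : r ∈ F (k0 + 1) := by
      simp only [hF, LinearMap.mem_ker, LinearMap.toSpanSingleton_apply]
      have h3 : s ^ (k0 + 1) • x = s • z := by rw [hzdef, pow_succ', mul_smul]
      rw [h3, smul_comm, hr, hsw]
    have hstab : F k0 = F (k0 + 1) := hk0 (k0 + 1) (Nat.le_succ k0)
    rw [← hstab] at hrk
    simp only [hF, LinearMap.mem_ker, LinearMap.toSpanSingleton_apply] at hrk
    exact hw0 (by rw [← hr, hzdef]; exact hrk)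
  -- conclude
  apply γ.top_of_spans
  intro x
  by_cases hx : x = 0
  · apply γ.span_top_of x ⊤ (fun r _ => by rw [hx, smul_zero]) (hpow 0 ⊤ le_top)
  · set J := LinearMap.ker (LinearMap.toSpanSingleton R E x) with hJ
    have hrad' : p ≤ Ideal.radical J := by
      intro s hs
      obtain ⟨k, hk⟩ := hfin x hx s hs
      exact ⟨k, by rwa [LinearMap.mem_ker, LinearMap.toSpanSingleton_apply]⟩
    obtain ⟨n, hn⟩ := Ideal.exists_pow_le_of_le_radical_of_fg hrad'
      (IsNoetherian.noetherian p)
    apply γ.span_top_of x J (fun r hr => by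
      rw [hJ, LinearMap.mem_ker, LinearMap.toSpanSingleton_apply] at hr; exact hr)
      (hpow n J hn)
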